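/- In a Bayesian incentive compatible mechanism, the interim allocation rule x_i(v_i) is monotone nondecreasing in v_i, and the interim payment satisfies the payment identity p_i(v_i) = v_i·x_i(v_i) − ∫₀^{v_i} x_i(z) dz + p_i(0). -/

import Mathlib

open MeasureTheory intervalIntegral Set

/-- Myerson's characterization of (Bayesian) incentive compatibility for a
single-dimensional agent: if truthtelling maximizes interim utility
`v·x(v) - p(v)`, then the interim allocation rule `x` is monotone
nondecreasing on values `v ≥ 0` and the payment identity
`p(v) = v·x(v) - ∫₀^v x(z) dz + p(0)` holds. -/
theorem myerson_ic_characterization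
    (x p : ℝ → ℝ)
    (hx01 : ∀ v : ℝ, 0 ≤ v → x v ∈ Icc (0:ℝ) 1)
    (hIC : ∀ v v' : ℝ, 0 ≤ v → 0 ≤ v' →
      v * x v' - p v' ≤ v * x v - p v) :
    MonotoneOn x (Ici 0) ∧
      ∀ v : ℝ, 0 ≤ v → p v = v * x v - (∫ z in (0:ℝ)..v, x z) + p 0 := by
  have hmono : MonotoneOn x (Ici 0) := by
    intro s hs t ht hst
    rcases eq_or_lt_of_le hst with rfl | h
    · exact le_rfl
    · have h1 := hIC s t hs ht
      have h2 := hIC t s ht hs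
      nlinarith
  refine ⟨hmono, ?_⟩
  have hint : ∀ a b : ℝ, 0 ≤ a → a ≤ b → IntervalIntegrable x volume a b := by
    intro a b ha hab
    apply MonotoneOn.intervalIntegrable
    apply hmono.mono
    rw [uIcc_of_le hab]
    exact fun z hz => le_trans ha hz.1
  set u : ℝ → ℝ := fun v => v * x v - p v with hu
  set F : ℝ → ℝ := fun v => ∫ z in (0:ℝ)..v, x z with hF
  have key : ∀ s t : ℝ, 0 ≤ s → s ≤ t →
      |(u t - F t) - (u s - F s)| ≤ (t - s) * (x t - x s) := by
    intro s t hs hst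
    have ht : (0:ℝ) ≤ t := hs.trans hst
    have hu1 : (t - s) * x s ≤ u t - u s := by
      have := hIC t s ht hs; simp only [hu]; nlinarith
    have hu2 : u t - u s ≤ (t - s) * x t := by
      have := hIC s t hs ht; simp only [hu]; nlinarith
    have hst' : F t - F s = ∫ z in s..t, x z := by
      simp only [hF]
      rw [← intervalIntegral.integral_interval_sub_left (hint 0 t le_rfl ht)
        (hint 0 s le_rfl hs)]
    have hi : IntervalIntegrable x volume s t := hint s t hs hst
    have hF1 : (t - s) * x s ≤ F t - F s := by
      rw [hst']
      have hlow : ∫ z in s..t, x s ≤ ∫ z in s..t, x z := by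
        apply intervalIntegral.integral_mono_on hst intervalIntegrable_const hi
        intro z hz
        exact hmono hs (le_trans hs hz.1) hz.1
      simpa using hlow
    have hF2 : F t - F s ≤ (t - s) * x t := by
      rw [hst']
      have hup : ∫ z in s..t, x z ≤ ∫ z in s..t, x t := by
        apply intervalIntegral.integral_mono_on hst hi intervalIntegrable_const
        intro z hz
        exact hmono (le_trans hs hz.1) ht hz.2
      simpa using hup
    rw [abs_le]
    constructor <;> linarith
  intro v hv
  have hF0 : F 0 = 0 := by simp [hF]
  have hkey2 : u v - F v = u 0 - F 0 := by
    rcases eq_or_lt_of_le hv with rfl | hv'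
    · rfl
    · have habs : ∀ n : ℕ, 1 ≤ n →
          |(u v - F v) - (u 0 - F 0)| ≤ (v * (x v - x 0)) / n := by
        intro n hn
        have hn0 : (0:ℝ) < n := by exact_mod_cast hn
        set t : ℕ → ℝ := fun k => (k : ℝ) * v / n with htdef
        have ht0 : t 0 = 0 := by simp [htdef]
        have htn : t n = v := by
          simp only [htdef]
          exact mul_div_cancel_left₀ v hn0.ne'
        have htnonneg : ∀ k : ℕ, 0 ≤ t k := fun k => by
          have : (0:ℝ) ≤ (k:ℝ) := Nat.cast_nonneg k
          positivity
        have htstep : ∀ k : ℕ, t (k+1) - t k = v / n := by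
          intro k
          simp only [htdef]
          push_cast
          ring
        have hle : ∀ k : ℕ, t k ≤ t (k+1) := by
          intro k
          have : (0:ℝ) ≤ v / n := by positivity
          linarith [htstep k]
        set g : ℕ → ℝ := fun k => u (t k) - F (t k) with hg
        have hsum : g n - g 0 = ∑ k ∈ Finset.range n, (g (k+1) - g k) :=
          (Finset.sum_range_sub g n).symm
        calc |(u v - F v) - (u 0 - F 0)| = |g n - g 0| := by rw [hg]; simp [htn, ht0]
          _ = |∑ k ∈ Finset.range n, (g (k+1) - g k)| := by rw [hsum]
          _ ≤ ∑ k ∈ Finset.range n, |g (k+1) - g k| := Finset.abs_sum_le_sum_abs _ _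
          _ ≤ ∑ k ∈ Finset.range n, (v / n) * (x (t (k+1)) - x (t k)) := by
              apply Finset.sum_le_sum
              intro k _
              have := key (t k) (t (k+1)) (htnonneg k) (hle k)
              rwa [htstep k] at this
          _ = (v / n) * ∑ k ∈ Finset.range n, (x (t (k+1)) - x (t k)) := by
              rw [Finset.mul_sum]
          _ = (v / n) * (x (t n) - x (t 0)) := by
              rw [Finset.sum_range_sub (fun k => x (t k))]
          _ = (v * (x v - x 0)) / n := by rw [htn, ht0]; ring
      have hlim : Filter.Tendsto (fun n : ℕ => (v * (x v - x 0)) / n)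
          Filter.atTop (nhds 0) := tendsto_const_div_atTop_nhds_zero_nat _
      have : |(u v - F v) - (u 0 - F 0)| ≤ 0 := by
        apply ge_of_tendsto hlim
        filter_upwards [Filter.eventually_ge_atTop 1] with n hn
        exact habs n hn
      have := abs_nonneg ((u v - F v) - (u 0 - F 0))
      linarith [abs_nonneg ((u v - F v) - (u 0 - F 0)),
        abs_sub_abs_le_abs_sub (u v - F v) (u 0 - F 0),
        (abs_eq_zero.mp (le_antisymm ‹|(u v - F v) - (u 0 - F 0)| ≤ 0› (abs_nonneg _)))]
  have hu0 : u 0 = -p 0 := by simp [hu]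
  have huv : u v = v * x v - p v := rfl
  have hFv : F v = ∫ z in (0:ℝ)..v, x z := rfl
  rw [← hFv]
  linarith [hkey2, hu0, hF0]
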